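/- Let N ≥ 2 and let V ⊆ ℝ^N be a two-dimensional linear subspace. Then there exist vectors φ₁, …, φ_{N−1} ∈ ℝ^N, each orthogonal to V (i.e. ⟨φᵢ, v⟩ = 0 for all v ∈ V), such that V equals the intersection of the half-spaces Hᵢ = { x ∈ ℝ^N : ⟨φᵢ, x⟩ ≥ 0 } for i = 1, …, N−1. -/

import Mathlib

open Matrix RealInnerProductSpace

/-- **technical Lemma, plane case.** Any two-dimensional linear subspace
of `ℝ^N` (with `N ≥ 2`) is the intersection of `N - 1` half-spaces determined by
vectors orthogonal to the subspace. -/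
theorem plane_eq_inter_halfspaces
    (N : ℕ) (hN : 2 ≤ N) (V : Submodule ℝ (Fin N → ℝ))
    (hV : Module.finrank ℝ V = 2) :
    ∃ φ : Fin (N - 1) → (Fin N → ℝ),
      (∀ i, ∀ v ∈ V, φ i ⬝ᵥ v = 0) ∧
      (V : Set (Fin N → ℝ)) = ⋂ i, {x : Fin N → ℝ | 0 ≤ φ i ⬝ᵥ x} := by
  classical
  let E := EuclideanSpace ℝ (Fin N)
  let e : E ≃ₗ[ℝ] (Fin N → ℝ) := WithLp.linearEquiv 2 ℝ (Fin N → ℝ)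
  let V' : Submodule ℝ E := V.comap e.toLinearMap
  have hmem : ∀ x : E, x ∈ V' ↔ e x ∈ V := fun x => Iff.rfl
  have hrank : Module.finrank ℝ V' = 2 := by
    have h1 : V' = Submodule.map (e.symm : (Fin N → ℝ) →ₗ[ℝ] E) V :=
      Submodule.comap_equiv_eq_map_symm e V
    rw [h1, LinearEquiv.finrank_map_eq e.symm V]
    exact hV
  have htot : Module.finrank ℝ E = N := by
    simp [E]
  have hW : Module.finrank ℝ V'ᗮ = N - 2 := by
    have h := Submodule.finrank_add_finrank_orthogonal (K := V')
    rw [htot] at h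
    omega
  let b := Module.finBasisOfFinrankEq ℝ V'ᗮ hW
  let s : Fin (N - 2) → E := fun j => (b j : E)
  have hdot : ∀ y x : E, e y ⬝ᵥ e x = (inner ℝ (y) (x) : ℝ) := by
    intro y x
    rw [PiLp.inner_apply]
    simp [dotProduct, RCLike.inner_apply, mul_comm, e]
    rfl
  have hs : ∀ j, ∀ v ∈ V', (inner ℝ (s j) (v) : ℝ) = 0 := by
    intro j v hv
    rw [real_inner_comm]
    exact (Submodule.mem_orthogonal V' (s j)).mp (b j).2 v hv
  refine ⟨fun i => if h : (i : ℕ) < N - 2 then e (s ⟨i, h⟩) else e (-(∑ j, s j)), ?_, ?_⟩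
  · intro i v hv
    have hv' : e.symm v ∈ V' := by rw [hmem]; simpa using hv
    have hev : v = e (e.symm v) := by simp
    by_cases h : (i : ℕ) < N - 2
    · simp only [dif_pos h]
      rw [hev, hdot]
      exact hs _ _ hv'
    · simp only [dif_neg h]
      rw [hev, hdot]
      rw [inner_neg_left, sum_inner]
      simp only [neg_eq_zero]
      exact Finset.sum_eq_zero fun j _ => hs j _ hv'
  · ext x
    simp only [Set.mem_iInter, Set.mem_setOf_eq, SetLike.mem_coe]
    constructor
    · intro hx i
      have hv' : e.symm x ∈ V' := by rw [hmem]; simpa using hx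
      have hev : x = e (e.symm x) := by simp
      by_cases h : (i : ℕ) < N - 2
      · simp only [dif_pos h]
        rw [hev, hdot, hs _ _ hv']
      · simp only [dif_neg h]
        rw [hev, hdot, inner_neg_left, sum_inner]
        rw [Finset.sum_eq_zero fun j _ => hs j _ hv']
        norm_num
    · intro hx
      set x' := e.symm x with hx'
      have hev : x = e x' := by simp [hx']
      have hj : ∀ j : Fin (N - 2), 0 ≤ (inner ℝ (s j) (x') : ℝ) := by
        intro j
        have hji : (j : ℕ) < N - 1 := by omega
        have := hx ⟨j, hji⟩
        simp only [dif_pos (show ((⟨(j : ℕ), hji⟩ : Fin (N - 1)) : ℕ) < N - 2 from j.2)] at this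
        rw [hev, hdot] at this
        simpa using this
      have hlast : (N - 2 : ℕ) < N - 1 := by omega
      have hsum : (∑ j, (inner ℝ (s j) (x') : ℝ)) ≤ 0 := by
        have := hx ⟨N - 2, hlast⟩
        simp only [dif_neg (show ¬ ((⟨N - 2, hlast⟩ : Fin (N - 1)) : ℕ) < N - 2 by simp)] at this
        rw [hev, hdot, inner_neg_left, sum_inner] at this
        linarith
      have hzero : ∀ j ∈ Finset.univ, (inner ℝ (s j) (x') : ℝ) = 0 := by
        rw [← Finset.sum_eq_zero_iff_of_nonneg (fun j _ => hj j)]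
        have : 0 ≤ ∑ j, (inner ℝ (s j) (x') : ℝ) := Finset.sum_nonneg fun j _ => hj j
        linarith
      have hx'V : x' ∈ V'ᗮᗮ := by
        rw [Submodule.mem_orthogonal]
        intro u hu
        have hrepr : u = ∑ j, b.repr ⟨u, hu⟩ j • s j := by
          have h1 := Module.Basis.sum_repr b ⟨u, hu⟩
          calc u = ((∑ j, b.repr ⟨u, hu⟩ j • b j : V'ᗮ) : E) := by rw [h1]
          _ = _ := by push_cast; rfl
        rw [hrepr, sum_inner]
        refine Finset.sum_eq_zero fun j hjmem => ?_
        rw [real_inner_smul_left, hzero j hjmem, mul_zero]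
      rw [Submodule.orthogonal_orthogonal] at hx'V
      rw [hev]
      exact (hmem x').mp hx'V
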